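/- If (X, x₀) is a pointed topological space whose fundamental group π₁(X, x₀) is abelian, then π₁^wh(X, x₀) is a topological group. -/

import Mathlib

open Set TopologicalSpace

attribute [local instance] Path.Homotopic.setoid

universe u v

variable {X : Type u} [TopologicalSpace X]

/-- The basic whisker-topology set `B([ζ],U)`: all classes of the form `[ζ·η]`
where `η` is a loop based at `x₀` with image in `U`. -/
def whiskerB {x₀ : X} (ζ : Path.Homotopic.Quotient x₀ x₀) (U : Set X) :
    Set (Path.Homotopic.Quotient x₀ x₀) :=
  {g | ∃ η : Path x₀ x₀, Set.range η ⊆ U ∧ g = ζ.trans ⟦η⟧}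

/-- The whisker topology on `π₁(X, x₀)`, generated by the basic sets `B([ζ],U)`
for `U` an open neighborhood of `x₀`. -/
def whiskerTopology (x₀ : X) : TopologicalSpace (Path.Homotopic.Quotient x₀ x₀) :=
  TopologicalSpace.generateFrom
    {S | ∃ (ζ : Path.Homotopic.Quotient x₀ x₀) (U : Set X),
      IsOpen U ∧ x₀ ∈ U ∧ S = whiskerB ζ U}

/-- Inversion `[ζ] ↦ [ζ⁻]` on `π₁(X, x₀)`. -/
def whiskerInv {x₀ : X} : Path.Homotopic.Quotient x₀ x₀ → Path.Homotopic.Quotient x₀ x₀ :=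
  Quotient.map Path.symm (fun _ _ h => Nonempty.map Path.Homotopy.symm₂ h)

/-- `π₁^wh(X, x₀)` is a topological group: the multiplication `([ζ],[η]) ↦ [ζ·η]`
is jointly continuous and inversion `[ζ] ↦ [ζ⁻]` is continuous, with respect to
the whisker topology. -/
def IsWhiskerTopGroup (x₀ : X) : Prop :=
  letI := whiskerTopology x₀
  Continuous (fun p : Path.Homotopic.Quotient x₀ x₀ × Path.Homotopic.Quotient x₀ x₀ =>
    p.1.trans p.2) ∧
  Continuous (whiskerInv (x₀ := x₀))


section Aux

variable {x₀ : X}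

lemma whisker_comp_lift {x₀ x₁ x₂ : X} (P₀ : Path x₀ x₁) (P₁ : Path x₁ x₂) :
    (⟦P₀.trans P₁⟧ : Path.Homotopic.Quotient x₀ x₂) = Path.Homotopic.Quotient.trans ⟦P₀⟧ ⟦P₁⟧ :=
  rfl

lemma whisker_comp_refl (a : Path.Homotopic.Quotient x₀ x₀) :
    a.trans ⟦Path.refl x₀⟧ = a := by
  induction a using Quotient.inductionOn with
  | h p =>
    rw [← whisker_comp_lift]
    exact Quotient.sound ⟨Path.Homotopy.transRefl p⟩

lemma whisker_comp_assoc (a b c : Path.Homotopic.Quotient x₀ x₀) :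
    (a.trans b).trans c = a.trans (b.trans c) := by
  induction a using Quotient.inductionOn with
  | h p =>
  induction b using Quotient.inductionOn with
  | h q =>
  induction c using Quotient.inductionOn with
  | h r =>
    simp only [← whisker_comp_lift]
    exact Quotient.sound ⟨Path.Homotopy.transAssoc p q r⟩

lemma whiskerInv_mk (p : Path x₀ x₀) : whiskerInv ⟦p⟧ = ⟦p.symm⟧ := rfl

lemma whiskerInv_comp (a b : Path.Homotopic.Quotient x₀ x₀) :
    whiskerInv (a.trans b) = (whiskerInv b).trans (whiskerInv a) := by
  induction a using Quotient.inductionOn with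
  | h p =>
  induction b using Quotient.inductionOn with
  | h q =>
    simp only [← whisker_comp_lift, whiskerInv_mk, ← whisker_comp_lift]
    rw [Path.trans_symm]

lemma whisker_mem_B (a : Path.Homotopic.Quotient x₀ x₀) {U : Set X} (hU : x₀ ∈ U) :
    a ∈ whiskerB a U :=
  ⟨Path.refl x₀, by simp [Path.refl_range, Set.singleton_subset_iff, hU],
    (whisker_comp_refl a).symm⟩

lemma whiskerB_isOpen (a : Path.Homotopic.Quotient x₀ x₀) {U : Set X}
    (hUo : IsOpen U) (hU : x₀ ∈ U) :
    @IsOpen _ (whiskerTopology x₀) (whiskerB a U) :=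
  TopologicalSpace.GenerateOpen.basic _ ⟨a, U, hUo, hU, rfl⟩

lemma whisker_key (h : ∀ a b : Path.Homotopic.Quotient x₀ x₀, a.trans b = b.trans a)
    (ζ a b u v w : Path.Homotopic.Quotient x₀ x₀) (hw : a.trans b = ζ.trans w) :
    (a.trans u).trans (b.trans v) = ζ.trans (w.trans (v.trans u)) := by
  rw [whisker_comp_assoc a u, h u (b.trans v), whisker_comp_assoc b v u,
    ← whisker_comp_assoc a b, hw, whisker_comp_assoc]

lemma whisker_key_inv (h : ∀ a b : Path.Homotopic.Quotient x₀ x₀, a.trans b = b.trans a)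
    (ζ a u w : Path.Homotopic.Quotient x₀ x₀) (hw : whiskerInv a = ζ.trans w) :
    whiskerInv (a.trans u) = ζ.trans (w.trans (whiskerInv u)) := by
  rw [whiskerInv_comp, h, hw, whisker_comp_assoc]

end Aux

/-- If `π₁(X, x₀)` is abelian, then `π₁^wh(X, x₀)` is a topological group. -/
theorem whisker_topGroup_of_abelian (x₀ : X)
    (h : ∀ a b : Path.Homotopic.Quotient x₀ x₀, a.trans b = b.trans a) :
    IsWhiskerTopGroup x₀ := by
  classical
  letI := whiskerTopology x₀
  constructor
  · rw [whiskerTopology, continuous_generateFrom_iff]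
    rintro S ⟨ζ, U, hUo, hU, rfl⟩
    rw [isOpen_prod_iff]
    rintro a b hab
    refine ⟨whiskerB a U, whiskerB b U, whiskerB_isOpen a hUo hU,
      whiskerB_isOpen b hUo hU, whisker_mem_B a hU, whisker_mem_B b hU, ?_⟩
    rintro ⟨p, q⟩ ⟨⟨η₁, hη₁, rfl⟩, ⟨η₂, hη₂, rfl⟩⟩
    obtain ⟨η₀, hη₀, hab⟩ := hab
    have hab' : a.trans b = ζ.trans ⟦η₀⟧ := hab
    refine ⟨η₀.trans (η₂.trans η₁), ?_, ?_⟩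
    · rw [Path.trans_range, Path.trans_range]
      exact Set.union_subset hη₀ (Set.union_subset hη₂ hη₁)
    · show (a.trans ⟦η₁⟧).trans (b.trans ⟦η₂⟧) = _
      rw [whisker_comp_lift η₀ (η₂.trans η₁), whisker_comp_lift η₂ η₁]
      exact whisker_key h ζ a b ⟦η₁⟧ ⟦η₂⟧ ⟦η₀⟧ hab'
  · rw [whiskerTopology, continuous_generateFrom_iff]
    rintro S ⟨ζ, U, hUo, hU, rfl⟩
    have heq : whiskerInv ⁻¹' whiskerB ζ U
        = ⋃ a ∈ whiskerInv ⁻¹' whiskerB ζ U, whiskerB a U := by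
      ext p
      simp only [Set.mem_iUnion]
      constructor
      · exact fun hp => ⟨p, hp, whisker_mem_B p hU⟩
      · rintro ⟨a, ha, η, hη, rfl⟩
        obtain ⟨η₀, hη₀, ha'⟩ := ha
        refine ⟨η₀.trans η.symm, ?_, ?_⟩
        · rw [Path.trans_range, Path.symm_range]
          exact Set.union_subset hη₀ hη
        · show whiskerInv (a.trans ⟦η⟧) = _
          rw [whisker_comp_lift η₀ η.symm]
          exact whisker_key_inv h ζ a ⟦η⟧ ⟦η₀⟧ ha'
    rw [heq]
    exact isOpen_biUnion fun a ha => whiskerB_isOpen a hUo hU
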